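/- Let U, f₀, g₀ be C¹ periodic functions on 𝕋 = [−π,π] and for t ≥ 0 define ρ(t,x,y) = f₀(y) sin(x + tU(y)) + g₀(y) cos(x + tU(y)) on 𝕋² (this is the solution of ∂_t ρ + U(y)∂_x ρ = 0 with initial data f₀(y) sin x + g₀(y) cos x). Then for all t ≥ 0, ‖ρ(t,·)‖²_{H¹(𝕋²)} = ‖ρ(0,·)‖²_{H¹(𝕋²)} + 2πt ∫_{−π}^{π} U′(y)[f₀(y)g₀′(y) − f₀′(y)g₀(y)] dy + πt² ∫_{−π}^{π} [(U′(y)f₀(y))² + (U′(y)g₀(y))²] dy. -/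

import Mathlib

open Real MeasureTheory intervalIntegral

noncomputable section

/-- Squared `H¹` norm on the torus `𝕋² = [−π,π]²`:
`‖ρ‖²_{H¹} = ∫_{𝕋²} (ρ² + (∂_x ρ)² + (∂_y ρ)²) dx dy`. -/
def h1NormSq (ρ : ℝ → ℝ → ℝ) : ℝ :=
  ∫ x in (-π)..π, ∫ y in (-π)..π,
    ((ρ x y) ^ 2 + (deriv (fun x' => ρ x' y) x) ^ 2 + (deriv (fun y' => ρ x y') y) ^ 2)

/-- Solution of `∂_t ρ + U(y) ∂_x ρ = 0` with initial data `f₀(y) sin x + g₀(y) cos x`. -/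
def shearSol (U f₀ g₀ : ℝ → ℝ) (t x y : ℝ) : ℝ :=
  f₀ y * Real.sin (x + t * U y) + g₀ y * Real.cos (x + t * U y)

lemma integral_cos_shift (a : ℝ) : ∫ x in (-π)..π, Real.cos (2 * x + a) = 0 := by
  have h : ∀ x ∈ Set.uIcc (-π) π,
      HasDerivAt (fun x => Real.sin (2 * x + a) / 2) (Real.cos (2 * x + a)) x := by
    intro x _
    have h1 : HasDerivAt (fun x : ℝ => 2 * x + a) 2 x := by
      simpa using ((hasDerivAt_id x).const_mul 2).add_const a
    have h2 : HasDerivAt (fun x => Real.sin (2 * x + a) / 2) (Real.cos (2 * x + a) * 2 / 2) x :=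
      (h1.sin).div_const 2
    convert h2 using 1
    ring
  rw [intervalIntegral.integral_eq_sub_of_hasDerivAt h
    ((Real.continuous_cos.comp (by continuity)).intervalIntegrable _ _)]
  have e1 : 2 * π + a = a + 2 * π := by ring
  have e2 : 2 * (-π) + a = a - 2 * π := by ring
  rw [e1, e2, Real.sin_add_two_pi, Real.sin_sub_two_pi]
  ring

lemma integral_sin_shift (a : ℝ) : ∫ x in (-π)..π, Real.sin (2 * x + a) = 0 := by
  have h : ∀ x ∈ Set.uIcc (-π) π,
      HasDerivAt (fun x => -(Real.cos (2 * x + a)) / 2) (Real.sin (2 * x + a)) x := by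
    intro x _
    have h1 : HasDerivAt (fun x : ℝ => 2 * x + a) 2 x := by
      simpa using ((hasDerivAt_id x).const_mul 2).add_const a
    have h2 : HasDerivAt (fun x => -(Real.cos (2 * x + a)) / 2) (-(-Real.sin (2 * x + a) * 2) / 2) x :=
      ((h1.cos).neg).div_const 2
    convert h2 using 1
    ring
  rw [intervalIntegral.integral_eq_sub_of_hasDerivAt h
    ((Real.continuous_sin.comp (by continuity)).intervalIntegrable _ _)]
  have e1 : 2 * π + a = a + 2 * π := by ring
  have e2 : 2 * (-π) + a = a - 2 * π := by ring
  rw [e1, e2, Real.cos_add_two_pi, Real.cos_sub_two_pi]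
  ring

/-- The inner `x`-integral in closed form. -/
lemma integral_x (A B P Q c : ℝ) :
    (∫ x in (-π)..π,
      ((A * Real.sin (x + c) + B * Real.cos (x + c)) ^ 2 +
        (A * Real.cos (x + c) - B * Real.sin (x + c)) ^ 2 +
        (P * Real.sin (x + c) + Q * Real.cos (x + c)) ^ 2)) =
    π * (2 * (A ^ 2 + B ^ 2) + P ^ 2 + Q ^ 2) := by
  have hpt : ∀ x : ℝ,
      (A * Real.sin (x + c) + B * Real.cos (x + c)) ^ 2 +
        (A * Real.cos (x + c) - B * Real.sin (x + c)) ^ 2 +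
        (P * Real.sin (x + c) + Q * Real.cos (x + c)) ^ 2 =
      (A ^ 2 + B ^ 2 + (P ^ 2 + Q ^ 2) / 2) +
        ((Q ^ 2 - P ^ 2) / 2) * Real.cos (2 * x + 2 * c) +
        (P * Q) * Real.sin (2 * x + 2 * c) := by
    intro x
    have h2c : Real.cos (2 * x + 2 * c) = 2 * Real.cos (x + c) ^ 2 - 1 := by
      rw [show 2 * x + 2 * c = 2 * (x + c) by ring, Real.cos_two_mul]
    have h2s : Real.sin (2 * x + 2 * c) = 2 * Real.sin (x + c) * Real.cos (x + c) := by
      rw [show 2 * x + 2 * c = 2 * (x + c) by ring, Real.sin_two_mul]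
    have hs := Real.sin_sq_add_cos_sq (x + c)
    rw [h2c, h2s]
    linear_combination (A ^ 2 + B ^ 2 + P ^ 2) * hs
  rw [intervalIntegral.integral_congr (g := fun x =>
      (A ^ 2 + B ^ 2 + (P ^ 2 + Q ^ 2) / 2) +
        ((Q ^ 2 - P ^ 2) / 2) * Real.cos (2 * x + 2 * c) +
        (P * Q) * Real.sin (2 * x + 2 * c)) (fun x _ => hpt x)]
  have i1 : IntervalIntegrable (fun _ : ℝ => (A ^ 2 + B ^ 2 + (P ^ 2 + Q ^ 2) / 2))
      volume (-π) π := intervalIntegrable_const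
  have i2 : IntervalIntegrable (fun x : ℝ => ((Q ^ 2 - P ^ 2) / 2) * Real.cos (2 * x + 2 * c))
      volume (-π) π := (Continuous.intervalIntegrable (by continuity) _ _)
  have i3 : IntervalIntegrable (fun x : ℝ => (P * Q) * Real.sin (2 * x + 2 * c))
      volume (-π) π := (Continuous.intervalIntegrable (by continuity) _ _)
  rw [intervalIntegral.integral_add (i1.add i2) i3, intervalIntegral.integral_add i1 i2,
    intervalIntegral.integral_const_mul, intervalIntegral.integral_const_mul,
    integral_cos_shift, integral_sin_shift, intervalIntegral.integral_const]
  simp only [smul_eq_mul]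
  ring

lemma swap_lemma (F : ℝ → ℝ → ℝ) (hF : Continuous fun p : ℝ × ℝ => F p.1 p.2) :
    (∫ x in (-π)..π, ∫ y in (-π)..π, F x y) = ∫ y in (-π)..π, ∫ x in (-π)..π, F x y := by
  have hle : (-π : ℝ) ≤ π := by linarith [Real.pi_pos]
  have hInt : Integrable (Function.uncurry F)
      ((volume.restrict (Set.Ioc (-π) π)).prod (volume.restrict (Set.Ioc (-π) π))) := by
    rw [Measure.prod_restrict]
    refine IntegrableOn.mono_set ?_
      (Set.prod_mono Set.Ioc_subset_Icc_self Set.Ioc_subset_Icc_self)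
    exact (hF.continuousOn).integrableOn_compact (isCompact_Icc.prod isCompact_Icc)
  simp_rw [intervalIntegral.integral_of_le hle]
  exact MeasureTheory.integral_integral_swap hInt

/-- Exact evolution of the `H¹` norm of `ρ(t,x,y) = f₀(y) sin(x + tU(y)) + g₀(y) cos(x + tU(y))`:
`‖ρ(t)‖²_{H¹} = ‖ρ(0)‖²_{H¹} + 2πt ∫ U′(f₀ g₀′ − f₀′ g₀) + πt² ∫ ((U′f₀)² + (U′g₀)²)`. -/
theorem h1_norm_evolution (U f₀ g₀ : ℝ → ℝ)
    (hU : ContDiff ℝ 1 U) (hf₀ : ContDiff ℝ 1 f₀) (hg₀ : ContDiff ℝ 1 g₀)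
    (hUper : ∀ y, U (y + 2 * π) = U y)
    (hfper : ∀ y, f₀ (y + 2 * π) = f₀ y) (hgper : ∀ y, g₀ (y + 2 * π) = g₀ y) :
    ∀ t : ℝ, 0 ≤ t →
      h1NormSq (shearSol U f₀ g₀ t) =
        h1NormSq (shearSol U f₀ g₀ 0) +
          2 * π * t *
            (∫ y in (-π)..π, deriv U y * (f₀ y * deriv g₀ y - deriv f₀ y * g₀ y)) +
          π * t ^ 2 *
            (∫ y in (-π)..π, ((deriv U y * f₀ y) ^ 2 + (deriv U y * g₀ y) ^ 2)) := by
  have hUc : Continuous U := hU.continuous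
  have hfc : Continuous f₀ := hf₀.continuous
  have hgc : Continuous g₀ := hg₀.continuous
  have hU' : Continuous (deriv U) := hU.continuous_deriv le_rfl
  have hf' : Continuous (deriv f₀) := hf₀.continuous_deriv le_rfl
  have hg' : Continuous (deriv g₀) := hg₀.continuous_deriv le_rfl
  -- the key identity for every time `t`
  have key : ∀ t : ℝ, h1NormSq (shearSol U f₀ g₀ t) =
      ∫ y in (-π)..π, π * (2 * (f₀ y ^ 2 + g₀ y ^ 2) +
        (deriv f₀ y - t * deriv U y * g₀ y) ^ 2 +
        (t * deriv U y * f₀ y + deriv g₀ y) ^ 2) := by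
    intro t
    have hdx : ∀ x y : ℝ, deriv (fun x' => shearSol U f₀ g₀ t x' y) x =
        f₀ y * Real.cos (x + t * U y) - g₀ y * Real.sin (x + t * U y) := by
      intro x y
      have h1 : HasDerivAt (fun x' : ℝ => x' + t * U y) 1 x := (hasDerivAt_id x).add_const _
      have hs : HasDerivAt (fun x' => Real.sin (x' + t * U y)) (Real.cos (x + t * U y)) x := by
        simpa using (h1.sin :
          HasDerivAt (fun x' => Real.sin (x' + t * U y)) (Real.cos (x + t * U y) * 1) x)
      have hc : HasDerivAt (fun x' => Real.cos (x' + t * U y)) (-Real.sin (x + t * U y)) x := by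
        simpa using (h1.cos :
          HasDerivAt (fun x' => Real.cos (x' + t * U y)) (-Real.sin (x + t * U y) * 1) x)
      have h := (hs.const_mul (f₀ y)).add (hc.const_mul (g₀ y))
      simp only [shearSol]
      refine h.deriv.trans ?_
      ring
    have hdy : ∀ x y : ℝ, deriv (fun y' => shearSol U f₀ g₀ t x y') y =
        (deriv f₀ y - t * deriv U y * g₀ y) * Real.sin (x + t * U y) +
        (t * deriv U y * f₀ y + deriv g₀ y) * Real.cos (x + t * U y) := by
      intro x y
      have hUy : HasDerivAt U (deriv U y) y := (hU.differentiable one_ne_zero y).hasDerivAt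
      have hfy : HasDerivAt f₀ (deriv f₀ y) y := (hf₀.differentiable one_ne_zero y).hasDerivAt
      have hgy : HasDerivAt g₀ (deriv g₀ y) y := (hg₀.differentiable one_ne_zero y).hasDerivAt
      have hθ : HasDerivAt (fun y' : ℝ => x + t * U y') (t * deriv U y) y :=
        (hUy.const_mul t).const_add x
      have hs : HasDerivAt (fun y' => Real.sin (x + t * U y'))
          (Real.cos (x + t * U y) * (t * deriv U y)) y :=
        hθ.sin
      have hc : HasDerivAt (fun y' => Real.cos (x + t * U y'))
          (-Real.sin (x + t * U y) * (t * deriv U y)) y :=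
        hθ.cos
      have h := (hfy.mul hs).add (hgy.mul hc)
      simp only [shearSol]
      refine h.deriv.trans ?_
      ring
    have step1 : h1NormSq (shearSol U f₀ g₀ t) =
        ∫ x in (-π)..π, ∫ y in (-π)..π,
          ((f₀ y * Real.sin (x + t * U y) + g₀ y * Real.cos (x + t * U y)) ^ 2 +
            (f₀ y * Real.cos (x + t * U y) - g₀ y * Real.sin (x + t * U y)) ^ 2 +
            ((deriv f₀ y - t * deriv U y * g₀ y) * Real.sin (x + t * U y) +
              (t * deriv U y * f₀ y + deriv g₀ y) * Real.cos (x + t * U y)) ^ 2) := by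
      unfold h1NormSq
      refine intervalIntegral.integral_congr fun x _ => ?_
      refine intervalIntegral.integral_congr fun y _ => ?_
      rw [hdx, hdy]
      simp only [shearSol]
    rw [step1]
    rw [swap_lemma _ (by fun_prop)]
    refine intervalIntegral.integral_congr fun y _ => ?_
    simpa using integral_x (f₀ y) (g₀ y) (deriv f₀ y - t * deriv U y * g₀ y)
      (t * deriv U y * f₀ y + deriv g₀ y) (t * U y)
  intro t _
  rw [key t, key 0]
  have hpt : ∀ y : ℝ,
      π * (2 * (f₀ y ^ 2 + g₀ y ^ 2) + (deriv f₀ y - t * deriv U y * g₀ y) ^ 2 +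
        (t * deriv U y * f₀ y + deriv g₀ y) ^ 2) =
      π * (2 * (f₀ y ^ 2 + g₀ y ^ 2) + (deriv f₀ y - 0 * deriv U y * g₀ y) ^ 2 +
        (0 * deriv U y * f₀ y + deriv g₀ y) ^ 2) +
      (2 * π * t) * (deriv U y * (f₀ y * deriv g₀ y - deriv f₀ y * g₀ y)) +
      (π * t ^ 2) * ((deriv U y * f₀ y) ^ 2 + (deriv U y * g₀ y) ^ 2) := by
    intro y; ring
  rw [intervalIntegral.integral_congr (fun y _ => hpt y)]
  have i1 : IntervalIntegrable (fun y => π * (2 * (f₀ y ^ 2 + g₀ y ^ 2) +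
      (deriv f₀ y - 0 * deriv U y * g₀ y) ^ 2 +
      (0 * deriv U y * f₀ y + deriv g₀ y) ^ 2)) volume (-π) π :=
    Continuous.intervalIntegrable (by fun_prop) _ _
  have i2 : IntervalIntegrable (fun y =>
      (2 * π * t) * (deriv U y * (f₀ y * deriv g₀ y - deriv f₀ y * g₀ y))) volume (-π) π :=
    Continuous.intervalIntegrable (by fun_prop) _ _
  have i3 : IntervalIntegrable (fun y =>
      (π * t ^ 2) * ((deriv U y * f₀ y) ^ 2 + (deriv U y * g₀ y) ^ 2)) volume (-π) π :=
    Continuous.intervalIntegrable (by fun_prop) _ _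
  rw [intervalIntegral.integral_add (i1.add i2) i3, intervalIntegral.integral_add i1 i2,
    intervalIntegral.integral_const_mul, intervalIntegral.integral_const_mul,
    intervalIntegral.integral_const_mul]
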